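/- Let ε ∈ (0, 1/180] and let n ≥ 1/(7ε²) be an integer (so n > 4628). If H is an n-vertex F5-free 3-graph with minimum degree δ(H) > (1/12 + ε)n², then the shadow ∂H is K7-free: ∂H contains no complete subgraph on 7 vertices. -/

import Mathlib

open Finset

section Defs

variable {V : Type*} [DecidableEq V]

/-- The degree of a vertex `v` in the 3-graph `H`: the number of edges containing `v`. -/
def degH (H : Finset (Finset V)) (v : V) : ℕ :=
  (H.filter fun e => v ∈ e).card

/-- `H` contains a copy of the generalized triangle `F₅ = {abc, abd, cde}`. -/
def HasF5 (H : Finset (Finset V)) : Prop :=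
  ∃ a b c d e : V,
    a ≠ b ∧ a ≠ c ∧ a ≠ d ∧ a ≠ e ∧ b ≠ c ∧ b ≠ d ∧ b ≠ e ∧ c ≠ d ∧ c ≠ e ∧ d ≠ e ∧
    ({a, b, c} : Finset V) ∈ H ∧ ({a, b, d} : Finset V) ∈ H ∧ ({c, d, e} : Finset V) ∈ H

/-- `H` contains a copy of `K₄³⁻ = {abc, abd, acd}`. -/
def HasK43m (H : Finset (Finset V)) : Prop :=
  ∃ a b c d : V,
    a ≠ b ∧ a ≠ c ∧ a ≠ d ∧ b ≠ c ∧ b ≠ d ∧ c ≠ d ∧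
    ({a, b, c} : Finset V) ∈ H ∧ ({a, b, d} : Finset V) ∈ H ∧ ({a, c, d} : Finset V) ∈ H

/-- `H` is 3-partite: the vertex set can be partitioned into three parts so that every
edge has at most one vertex in each part. -/
def Tripartite (H : Finset (Finset V)) : Prop :=
  ∃ P : V → Fin 3, ∀ e ∈ H, ∀ u ∈ e, ∀ v ∈ e, u ≠ v → P u ≠ P v

/-- The shadow graph `∂H` of the 3-graph `H`: two distinct vertices are adjacent iff
they lie in a common edge of `H`. -/
def shadowG (H : Finset (Finset V)) : SimpleGraph V where
  Adj u v := u ≠ v ∧ ∃ e ∈ H, u ∈ e ∧ v ∈ e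
  symm := by
    constructor
    rintro u v ⟨hne, e, he, hu, hv⟩
    exact ⟨hne.symm, e, he, hv, hu⟩
  loopless := by constructor; rintro u ⟨hne, -⟩; exact hne rfl

end Defs

/-- For `ε ∈ (0, 1/180]` and `n ≥ 1/(7ε²)`, every `n`-vertex `F₅`-free 3-graph with
minimum degree greater than `(1/12 + ε)n²` has a `K₇`-free shadow. -/
theorem F5_shadow_K7_free (ε : ℝ) (hε0 : 0 < ε) (hε : ε ≤ 1 / 180)
    (n : ℕ) (hn : 1 / (7 * ε ^ 2) ≤ (n : ℝ))
    (V : Type*) [Fintype V] [DecidableEq V] (hV : Fintype.card V = n)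
    (H : Finset (Finset V)) (h3 : ∀ e ∈ H, e.card = 3)
    (hF5 : ¬ HasF5 H)
    (hδ : ∀ v : V, (1 / 12 + ε) * (n : ℝ) ^ 2 < (degH H v : ℝ)) :
    (shadowG H).CliqueFree 7 := by
  
  classical
  intro s hs
  obtain ⟨hclique, hcard⟩ := hs
  have hsne : s.Nonempty := Finset.card_pos.mp (by rw [hcard]; norm_num)
  set P2 : Finset (Finset V) := Finset.univ.powersetCard 2 with hP2
  set t : Finset V → ℕ := fun p => (s.filter fun v => v ∉ p ∧ insert v p ∈ H).card with ht
  -- Step 1: degrees via pairs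
  have hdeg : ∀ v : V, degH H v = (P2.filter fun p => v ∉ p ∧ insert v p ∈ H).card := by
    intro v
    unfold degH
    refine Finset.card_bij' (fun e _ => e.erase v) (fun p _ => insert v p) ?_ ?_ ?_ ?_
    · intro e he
      simp only [Finset.mem_filter] at he ⊢
      obtain ⟨heH, hv⟩ := he
      refine ⟨?_, Finset.notMem_erase v e, ?_⟩
      · rw [hP2, Finset.mem_powersetCard_univ, Finset.card_erase_of_mem hv, h3 e heH]
      · rw [Finset.insert_erase hv]; exact heH
    · intro p hp
      simp only [Finset.mem_filter] at hp ⊢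
      exact ⟨hp.2.2, Finset.mem_insert_self v p⟩
    · intro e he
      simp only [Finset.mem_filter] at he
      exact Finset.insert_erase he.2
    · intro p hp
      simp only [Finset.mem_filter] at hp
      exact Finset.erase_insert hp.2.1
  -- Step 2: double counting
  have hsum : ∑ v ∈ s, degH H v = ∑ p ∈ P2, t p := by
    simp only [hdeg, ht, Finset.card_filter]
    exact Finset.sum_comm
  -- Step 3: t ≤ 7
  have htle : ∀ p, t p ≤ 7 := by
    intro p
    calc t p ≤ s.card := Finset.card_filter_le _ _
    _ = 7 := hcard
  -- key F5 lemma
  have key : ∀ p ∈ P2, ∀ vi, ∀ vj, vi ≠ vj → vi ∉ p → vj ∉ p →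
      insert vi p ∈ H → insert vj p ∈ H →
      ∀ e ∈ H, vi ∈ e → vj ∈ e → ∀ x ∈ e, x ≠ vi → x ≠ vj → x ∈ p := by
    intro p hp vi vj hij hvi hvj hei hej e heH hie hje x hxe hxi hxj
    by_contra hxp
    have hpc : p.card = 2 := by
      rw [hP2, Finset.mem_powersetCard_univ] at hp; exact hp
    obtain ⟨y, z, hyz, rfl⟩ := Finset.card_eq_two.mp hpc
    simp only [Finset.mem_insert, Finset.mem_singleton, not_or] at hvi hvj hxp
    apply hF5
    have hecard : e = {vi, vj, x} := by
      have hsub : ({vi, vj, x} : Finset V) ⊆ e := by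
        intro w hw
        simp only [Finset.mem_insert, Finset.mem_singleton] at hw
        rcases hw with rfl | rfl | rfl <;> assumption
      have hc3 : ({vi, vj, x} : Finset V).card = 3 :=
        Finset.card_eq_three.mpr ⟨vi, vj, x, hij, fun h => hxi h.symm, fun h => hxj h.symm, rfl⟩
      exact (Finset.eq_of_subset_of_card_le hsub (by rw [h3 e heH, hc3])).symm
    have h1 : ({y, z, vi} : Finset V) ∈ H := by
      have : ({y, z, vi} : Finset V) = insert vi {y, z} := by
        ext w; simp only [Finset.mem_insert, Finset.mem_singleton]; tauto
      rw [this]; exact hei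
    have h2 : ({y, z, vj} : Finset V) ∈ H := by
      have : ({y, z, vj} : Finset V) = insert vj {y, z} := by
        ext w; simp only [Finset.mem_insert, Finset.mem_singleton]; tauto
      rw [this]; exact hej
    have h3' : ({vi, vj, x} : Finset V) ∈ H := hecard ▸ heH
    exact ⟨y, z, vi, vj, x, hyz,
      fun h => hvi.1 h.symm, fun h => hvj.1 h.symm, fun h => hxp.1 h.symm,
      fun h => hvi.2 h.symm, fun h => hvj.2 h.symm, fun h => hxp.2 h.symm,
      hij, hxi.symm, hxj.symm, h1, h2, h3'⟩
  -- choice of third vertices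
  let f : V → V → V := fun i j =>
    if h : ∃ x : V, x ≠ i ∧ x ≠ j ∧ ∃ e ∈ H, i ∈ e ∧ j ∈ e ∧ x ∈ e then h.choose else i
  have hf : ∀ i ∈ s, ∀ j ∈ s, i ≠ j →
      f i j ≠ i ∧ f i j ≠ j ∧ ∃ e ∈ H, i ∈ e ∧ j ∈ e ∧ f i j ∈ e := by
    intro i hi j hj hij
    have hadj : (shadowG H).Adj i j := hclique hi hj hij
    obtain ⟨-, e, heH, hie, hje⟩ := hadj
    have hex : ∃ x : V, x ≠ i ∧ x ≠ j ∧ ∃ e ∈ H, i ∈ e ∧ j ∈ e ∧ x ∈ e := by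
      have hne : (e \ {i, j}).Nonempty := by
        rw [← Finset.card_pos]
        have h1 := Finset.le_card_sdiff ({i, j} : Finset V) e
        have h2 : ({i, j} : Finset V).card ≤ 2 := Finset.card_le_two
        rw [h3 e heH] at h1
        omega
      obtain ⟨x, hx⟩ := hne
      rw [Finset.mem_sdiff] at hx
      simp only [Finset.mem_insert, Finset.mem_singleton, not_or] at hx
      exact ⟨x, hx.2.1, hx.2.2, e, heH, hie, hje, hx.1⟩
    have : f i j = hex.choose := dif_pos hex
    rw [this]
    exact hex.choose_spec
  set W : Finset V := s.offDiag.image (fun q => f q.1 q.2) with hW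
  have hWcard : W.card ≤ 42 := by
    calc W.card ≤ s.offDiag.card := Finset.card_image_le
    _ = 7 * 7 - 7 := by rw [Finset.offDiag_card, hcard]
    _ = 42 := by norm_num
  set B : Finset (Finset V) := P2.filter (fun p => 2 ≤ t p) with hBdef
  have hB : ∀ p ∈ B, ∃ x ∈ W, x ∈ p := by
    intro p hpB
    rw [hBdef, Finset.mem_filter] at hpB
    obtain ⟨hp, h2t⟩ := hpB
    obtain ⟨vi, hvi, vj, hvj, hij⟩ := Finset.one_lt_card.mp h2t
    rw [Finset.mem_filter] at hvi hvj
    obtain ⟨hfi, hfj, e, heH, hie, hje, hfe⟩ := hf vi hvi.1 vj hvj.1 hij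
    refine ⟨f vi vj, Finset.mem_image.mpr ⟨(vi, vj),
      Finset.mem_offDiag.mpr ⟨hvi.1, hvj.1, hij⟩, rfl⟩, ?_⟩
    exact key p hp vi vj hij hvi.2.1 hvj.2.1 hvi.2.2 hvj.2.2 e heH hie hje
      (f vi vj) hfe hfi hfj
  -- pairs containing a fixed vertex
  have hpairx : ∀ x : V, (P2.filter fun p => x ∈ p).card ≤ n := by
    intro x
    have hle : (P2.filter fun p => x ∈ p).card ≤
        ((Finset.univ : Finset V).powersetCard 1).card := by
      apply Finset.card_le_card_of_injOn (fun p => p.erase x)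
      · intro p hp
        rw [Finset.mem_coe, Finset.mem_filter, hP2, Finset.mem_powersetCard_univ] at hp
        rw [Finset.mem_coe, Finset.mem_powersetCard_univ, Finset.card_erase_of_mem hp.2, hp.1]
      · intro p hp q hq hpq
        rw [Finset.mem_coe, Finset.mem_filter] at hp hq
        rw [← Finset.insert_erase hp.2, ← Finset.insert_erase hq.2]
        simp only at hpq
        rw [hpq]
    rwa [Finset.card_powersetCard, Finset.card_univ, hV, Nat.choose_one_right] at hle
  have hBcard : B.card ≤ 42 * n := by
    have hsub : B ⊆ W.biUnion (fun x => P2.filter fun p => x ∈ p) := by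
      intro p hp
      obtain ⟨x, hxW, hxp⟩ := hB p hp
      rw [Finset.mem_biUnion]
      have hpP2 : p ∈ P2 := Finset.mem_of_mem_filter p hp
      exact ⟨x, hxW, Finset.mem_filter.mpr ⟨hpP2, hxp⟩⟩
    calc B.card ≤ (W.biUnion (fun x => P2.filter fun p => x ∈ p)).card :=
          Finset.card_le_card hsub
    _ ≤ ∑ x ∈ W, (P2.filter fun p => x ∈ p).card := Finset.card_biUnion_le
    _ ≤ ∑ _x ∈ W, n := Finset.sum_le_sum (fun x _ => hpairx x)
    _ = W.card * n := by rw [Finset.sum_const, smul_eq_mul]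
    _ ≤ 42 * n := Nat.mul_le_mul_right n hWcard
  -- upper bound on the sum
  have hsum_le : ∑ p ∈ P2, t p ≤ n.choose 2 + 7 * (42 * n) := by
    have hBsub : B ⊆ P2 := Finset.filter_subset _ _
    rw [← Finset.sum_sdiff hBsub]
    have h1 : ∑ p ∈ P2 \ B, t p ≤ (P2 \ B).card * 1 := by
      apply Finset.sum_le_card_nsmul
      intro p hp
      rw [Finset.mem_sdiff, hBdef, Finset.mem_filter] at hp
      have h2t : ¬ 2 ≤ t p := fun h => hp.2 ⟨hp.1, h⟩
      omega
    have h2 : ∑ p ∈ B, t p ≤ B.card * 7 := by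
      apply Finset.sum_le_card_nsmul
      intro p _
      exact htle p
    have hP2card : P2.card = n.choose 2 := by
      rw [hP2, Finset.card_powersetCard, Finset.card_univ, hV]
    have h3' : (P2 \ B).card ≤ n.choose 2 := by
      calc (P2 \ B).card ≤ P2.card := Finset.card_le_card (Finset.sdiff_subset)
      _ = n.choose 2 := hP2card
    calc ∑ p ∈ P2 \ B, t p + ∑ p ∈ B, t p ≤ (P2 \ B).card * 1 + B.card * 7 :=
          Nat.add_le_add h1 h2
    _ ≤ n.choose 2 * 1 + (42 * n) * 7 :=
          Nat.add_le_add (Nat.mul_le_mul_right 1 h3') (Nat.mul_le_mul_right 7 hBcard)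
    _ = n.choose 2 + 7 * (42 * n) := by ring
  -- lower bound
  have hlow : (7 : ℝ) * ((1 / 12 + ε) * (n : ℝ) ^ 2) < ∑ v ∈ s, (degH H v : ℝ) := by
    calc (7 : ℝ) * ((1 / 12 + ε) * (n : ℝ) ^ 2)
        = ∑ _v ∈ s, (1 / 12 + ε) * (n : ℝ) ^ 2 := by
          rw [Finset.sum_const, hcard]; push_cast; ring
    _ < ∑ v ∈ s, (degH H v : ℝ) := Finset.sum_lt_sum_of_nonempty hsne (fun v _ => hδ v)
  -- combine
  have hup : ∑ v ∈ s, (degH H v : ℝ) ≤ (n : ℝ) ^ 2 / 2 + 294 * n := by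
    have h1 : ((∑ v ∈ s, degH H v : ℕ) : ℝ) ≤ ((n.choose 2 + 7 * (42 * n) : ℕ) : ℝ) := by
      exact_mod_cast hsum ▸ hsum_le
    have h2 : ((n.choose 2 : ℕ) : ℝ) = (n : ℝ) * ((n : ℝ) - 1) / 2 := Nat.cast_choose_two ℝ n
    rw [Nat.cast_add, h2, Nat.cast_sum] at h1
    push_cast at h1
    nlinarith [Nat.cast_nonneg (α := ℝ) n]
  -- numerics
  have hn' : (32400 : ℝ) / 7 ≤ (n : ℝ) := by
    have hε2 : 7 * ε ^ 2 ≤ 7 / 32400 := by nlinarith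
    have hpos : (0 : ℝ) < 7 * ε ^ 2 := by positivity
    have : (32400 : ℝ) / 7 ≤ 1 / (7 * ε ^ 2) := by
      rw [div_le_div_iff₀ (by norm_num) hpos]
      nlinarith
    linarith
  nlinarith [hlow, hup, hn', hε0, sq_nonneg ((n : ℝ) - 3528)]
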